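/- Let L > 0, ε > 0, and let f̂: [0,1] → ℝ be L-Lipschitz continuous. Let n_s ≥ 2 and N = ⌊L/(2ε)⌋ + 1. Then there exists a shallow PLN-Net f of norm size n_s and width n_s·N from ℝ to ℝ such that sup_{x ∈ [0,1]} |f(x) − f̂(x)| < ε. -/

import Mathlib

/-- Layer normalization on `ℝ^n`: `LN(h)ⱼ = (hⱼ − μ)/σ` when `σ ≠ 0`, and `0` when `σ = 0`. -/
noncomputable def LN {n : ℕ} (h : Fin n → ℝ) : Fin n → ℝ :=
  let μ : ℝ := (∑ i, h i) / n
  let σ : ℝ := Real.sqrt ((∑ i, (h i - μ) ^ 2) / n)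
  if σ = 0 then 0 else fun j => (h j - μ) / σ

/-- Parallel layer normalization: `h ∈ ℝ^{n_s·N}` is split into `N` consecutive blocks of
size `n_s` and `LN` is applied to each block. -/
noncomputable def PLN (ns N : ℕ) (h : Fin (N * ns) → ℝ) : Fin (N * ns) → ℝ :=
  fun i => LN (fun j : Fin ns => h (finProdFinEquiv (i.divNat, j))) i.modNat

lemma real_sign_mono {t u : ℝ} (h : t ≤ u) : Real.sign t ≤ Real.sign u := by
  rcases lt_trichotomy t 0 with ht | ht | ht
  · rw [Real.sign_of_neg ht]
    rcases lt_trichotomy u 0 with hu | hu | hu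
    · rw [Real.sign_of_neg hu]
    · simp [hu]
    · rw [Real.sign_of_pos hu]; norm_num
  · subst ht
    rw [Real.sign_zero]
    rcases eq_or_lt_of_le h with hu | hu
    · simp [← hu]
    · rw [Real.sign_of_pos hu]; norm_num
  · rw [Real.sign_of_pos ht, Real.sign_of_pos (lt_of_lt_of_le ht h)]

lemma real_sign_le_one (t : ℝ) : Real.sign t ≤ 1 := by
  rcases lt_trichotomy t 0 with ht | ht | ht
  · rw [Real.sign_of_neg ht]; norm_num
  · simp [ht]
  · rw [Real.sign_of_pos ht]

lemma neg_one_le_real_sign (t : ℝ) : -1 ≤ Real.sign t := by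
  rcases lt_trichotomy t 0 with ht | ht | ht
  · rw [Real.sign_of_neg ht]
  · simp [ht]
  · rw [Real.sign_of_pos ht]; norm_num

lemma LN_block {n : ℕ} (hn : 2 ≤ n) (t : ℝ) (j0 : Fin n) (hj0 : (j0:ℕ) = 0) :
    LN (fun j : Fin n => (if (j:ℕ) = 0 then (1:ℝ) else if (j:ℕ) = 1 then -1 else 0) * t) j0
      = Real.sign t / Real.sqrt (2 / n) := by
  have hn0 : (0:ℝ) < n := by positivity
  set u : ℕ → ℝ := fun m => if m = 0 then (1:ℝ) else if m = 1 then -1 else 0 with hu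
  have hsum : (∑ j : Fin n, u j * t) = 0 := by
    rw [← Finset.sum_mul, Fin.sum_univ_eq_sum_range u n]
    have : ∀ m, u m = (if m = 0 then (1:ℝ) else 0) + (if m = 1 then (-1:ℝ) else 0) := by
      intro m; simp only [hu]; split_ifs <;> simp_all
    rw [Finset.sum_congr rfl (fun m _ => this m), Finset.sum_add_distrib,
      Finset.sum_ite_eq' (Finset.range n) 0 (fun _ => (1:ℝ)),
      Finset.sum_ite_eq' (Finset.range n) 1 (fun _ => (-1:ℝ))]
    simp only [Finset.mem_range]
    rw [if_pos (by omega), if_pos (by omega)]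
    ring
  have hsumsq : (∑ j : Fin n, (u j * t) ^ 2) = 2 * t ^ 2 := by
    have huq : ∀ m, (u m)^2 = (if m = 0 then (1:ℝ) else 0) + (if m = 1 then (1:ℝ) else 0) := by
      intro m; simp only [hu]; split_ifs <;> simp_all <;> ring
    have : (∑ j : Fin n, (u j * t) ^ 2) = (∑ j : Fin n, (u (j:ℕ))^2) * t^2 := by
      simp only [mul_pow]; rw [← Finset.sum_mul]
    rw [this, Fin.sum_univ_eq_sum_range (fun m => (u m)^2) n,
      Finset.sum_congr rfl (fun m _ => huq m), Finset.sum_add_distrib,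
      Finset.sum_ite_eq' (Finset.range n) 0 (fun _ => (1:ℝ)),
      Finset.sum_ite_eq' (Finset.range n) 1 (fun _ => (1:ℝ))]
    simp only [Finset.mem_range]
    rw [if_pos (by omega), if_pos (by omega)]
    ring
  show LN (fun j : Fin n => u j * t) j0 = _
  simp only [LN, hsum, zero_div]
  have hσ : Real.sqrt ((∑ j : Fin n, (u j * t - 0) ^ 2) / n) = |t| * Real.sqrt (2 / n) := by
    simp only [sub_zero, hsumsq]
    rw [show (2 * t^2 : ℝ) / n = t^2 * (2 / n) by ring, Real.sqrt_mul (sq_nonneg t),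
      Real.sqrt_sq_eq_abs]
  rw [hσ]
  have hc : (0:ℝ) < Real.sqrt (2 / n) := Real.sqrt_pos.2 (by positivity)
  rcases eq_or_ne t 0 with rfl | ht
  · rw [if_pos (by simp), Real.sign_zero, zero_div]; rfl
  · rw [if_neg (by positivity)]
    show (u (j0:ℕ) * t - 0) / _ = _
    rw [hj0]
    simp only [hu, if_pos rfl, one_mul, sub_zero]
    rcases lt_trichotomy t 0 with h | h | h
    · rw [Real.sign_of_neg h, abs_of_neg h]
      field_simp
    · exact absurd h ht
    · rw [Real.sign_of_pos h, abs_of_pos h]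
      field_simp

lemma divNat_eq {N ns : ℕ} (k : Fin N) (j : Fin ns) :
    (finProdFinEquiv (k, j)).divNat = k := by
  have h := finProdFinEquiv.symm_apply_apply (k, j)
  rw [finProdFinEquiv_symm_apply, Prod.mk.injEq] at h
  exact h.1

lemma modNat_eq {N ns : ℕ} (k : Fin N) (j : Fin ns) :
    (finProdFinEquiv (k, j)).modNat = j := by
  have h := finProdFinEquiv.symm_apply_apply (k, j)
  rw [finProdFinEquiv_symm_apply, Prod.mk.injEq] at h
  exact h.2

/-- Universal approximation of univariate `L`-Lipschitz functions by shallow PLN-Nets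
of norm size `n_s ≥ 2` and width `n_s·N` with `N = ⌊L/(2ε)⌋ + 1`. -/
theorem shallow_PLNNet_approximates_lipschitz (L ε : ℝ) (hL : 0 < L) (hε : 0 < ε)
    (fh : ℝ → ℝ)
    (hlip : ∀ x ∈ Set.Icc (0:ℝ) 1, ∀ y ∈ Set.Icc (0:ℝ) 1, |fh x - fh y| ≤ L * |x - y|)
    (ns : ℕ) (hns : 2 ≤ ns) (N : ℕ) (hN : N = ⌊L / (2 * ε)⌋₊ + 1) :
    ∃ (w₁ c₁ w₂ : Fin (N * ns) → ℝ) (c₂ : ℝ), ∀ x ∈ Set.Icc (0:ℝ) 1,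
      |(∑ i, w₂ i * PLN ns N (fun i' => w₁ i' * x + c₁ i') i) + c₂ - fh x| < ε := by
  have hNpos : 0 < N := by omega
  have hN0 : (0:ℝ) < N := by exact_mod_cast hNpos
  have hns0 : (0:ℝ) < ns := by positivity
  set q : ℕ → ℝ := fun k => fh ((2*k+1)/(2*N)) with hq
  set a : ℕ → ℝ := fun k => if k = 0 then 0 else (q k - q (k-1))/2 with ha
  set c : ℝ := Real.sqrt (2/(ns:ℝ)) with hc
  have hcpos : 0 < c := Real.sqrt_pos.2 (by positivity)
  set u : ℕ → ℝ := fun m => if m = 0 then (1:ℝ) else if m = 1 then -1 else 0 with hu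
  refine ⟨fun i => u (i.modNat : ℕ),
    fun i => u (i.modNat : ℕ) * (-((i.divNat : ℕ) : ℝ)/N),
    fun i => if ((i.modNat : ℕ) = 0) then c * a (i.divNat : ℕ) else 0,
    q 0 + ∑ k ∈ Finset.range N, a k, ?_⟩
  intro x hx
  obtain ⟨hx0, hx1⟩ := hx
  -- Step 1: compute the network output
  have hnet : (∑ i, (if ((i.modNat : ℕ) = 0) then c * a (i.divNat : ℕ) else 0) *
      PLN ns N (fun i' => u (i'.modNat : ℕ) * x + u (i'.modNat : ℕ) * (-((i'.divNat : ℕ) : ℝ)/N)) i)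
      = ∑ k ∈ Finset.range N, a k * Real.sign (x - k/N) := by
    rw [← Equiv.sum_comp finProdFinEquiv, Fintype.sum_prod_type]
    rw [← Fin.sum_univ_eq_sum_range (fun k => a k * Real.sign (x - k/N)) N]
    refine Finset.sum_congr rfl (fun k _ => ?_)
    have hj0lt : 0 < ns := by omega
    set j0 : Fin ns := ⟨0, hj0lt⟩ with hj0
    have hPLN : ∀ j : Fin ns, PLN ns N (fun i' => u (i'.modNat : ℕ) * x +
        u (i'.modNat : ℕ) * (-((i'.divNat : ℕ) : ℝ)/N)) (finProdFinEquiv (k, j))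
        = LN (fun j' : Fin ns => (if ((j':ℕ) = 0) then (1:ℝ) else if (j':ℕ) = 1 then -1 else 0)
            * (x - (k:ℕ)/N)) j := by
      intro j
      simp only [PLN, divNat_eq, modNat_eq]
      congr 1
      funext j'
      simp only [hu]
      split_ifs <;> ring
    calc (∑ j : Fin ns, (if (((finProdFinEquiv (k, j)).modNat : ℕ) = 0) then
            c * a ((finProdFinEquiv (k, j)).divNat : ℕ) else 0) *
          PLN ns N (fun i' => u (i'.modNat : ℕ) * x + u (i'.modNat : ℕ) * (-((i'.divNat : ℕ) : ℝ)/N))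
            (finProdFinEquiv (k, j)))
        = ∑ j : Fin ns, (if j = j0 then c * a (k:ℕ) *
            LN (fun j' : Fin ns => (if ((j':ℕ) = 0) then (1:ℝ) else if (j':ℕ) = 1 then -1 else 0)
              * (x - (k:ℕ)/N)) j else 0) := by
          refine Finset.sum_congr rfl (fun j _ => ?_)
          rw [hPLN j]
          simp only [divNat_eq, modNat_eq]
          have hiff : ((j:ℕ) = 0) ↔ j = j0 := by
            simp [Fin.ext_iff, hj0]
          by_cases hj : j = j0
          · rw [if_pos (hiff.mpr hj), if_pos hj, mul_assoc]
          · rw [if_neg (fun h => hj (hiff.mp h)), if_neg hj, zero_mul]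
      _ = c * a (k:ℕ) * LN (fun j' : Fin ns =>
            (if ((j':ℕ) = 0) then (1:ℝ) else if (j':ℕ) = 1 then -1 else 0) * (x - (k:ℕ)/N)) j0 := by
          rw [Finset.sum_ite_eq' Finset.univ j0]
          simp
      _ = a (k:ℕ) * Real.sign (x - (k:ℕ)/N) := by
          rw [LN_block hns (x - (k:ℕ)/N) j0 rfl]
          rw [← hc]
          field_simp
  rw [hnet]
  -- Step 2: the step-function analysis
  set Hb : ℕ → ℝ := fun k => if k = 0 then 1 else if N ≤ k then 0
    else (1 + Real.sign (x - k/N))/2 with hHb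
  have hHb0 : Hb 0 = 1 := by simp [hHb]
  have hHbN : Hb N = 0 := by simp [hHb]; omega
  have hHb_nonneg : ∀ k, 0 ≤ Hb k := by
    intro k
    simp only [hHb]
    split_ifs
    · norm_num
    · norm_num
    · have := neg_one_le_real_sign (x - k/N); linarith
  have hHb_le_one : ∀ k, Hb k ≤ 1 := by
    intro k
    simp only [hHb]
    split_ifs
    · norm_num
    · norm_num
    · have := real_sign_le_one (x - k/N); linarith
  have hHb_mono : ∀ k, Hb (k+1) ≤ Hb k := by
    intro k
    rcases Nat.eq_zero_or_pos k with rfl | hk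
    · exact hHb_le_one 1
    rcases le_or_gt N (k+1) with h1 | h1
    · calc Hb (k+1) = 0 := by simp only [hHb]; rw [if_neg (by omega), if_pos h1]
        _ ≤ Hb k := hHb_nonneg k
    · have hkN : k < N := by omega
      simp only [hHb]
      rw [if_neg (by omega), if_neg (by omega), if_neg (by omega), if_neg (by omega)]
      have hle : x - (↑(k+1):ℕ)/N ≤ x - (k:ℝ)/N := by
        have h := (div_le_div_iff_of_pos_right hN0).mpr (show ((k:ℝ)) ≤ ((k:ℝ)+1) by linarith)
        push_cast
        linarith
      have := real_sign_mono hle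
      push_cast at this ⊢
      linarith
  -- L/(2N) < ε
  have hhalf : L / (2*N) < ε := by
    have h1 : L / (2*ε) < (N:ℝ) := by
      rw [hN]; push_cast; exact Nat.lt_floor_add_one (L/(2*ε))
    rw [div_lt_iff₀ (by positivity)] at h1 ⊢
    nlinarith
  -- membership of midpoints
  have hmem : ∀ k : ℕ, k < N → (2*(k:ℝ)+1)/(2*N) ∈ Set.Icc (0:ℝ) 1 := by
    intro k hk
    constructor
    · positivity
    · rw [div_le_one (by positivity)]
      have : (k:ℝ) + 1 ≤ N := by exact_mod_cast hk
      linarith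
  -- if χ_k ≠ 0 then x is within 1/(2N) of the midpoint
  have hnear : ∀ k, k < N → Hb (k+1) < Hb k → |(2*(k:ℝ)+1)/(2*N) - x| ≤ 1/(2*N) := by
    intro k hkN hlt
    have h1 : (k:ℝ)/N ≤ x := by
      rcases Nat.eq_zero_or_pos k with rfl | hk
      · simpa using hx0
      · have hpos : 0 < Hb k := lt_of_le_of_lt (hHb_nonneg (k+1)) hlt
        by_contra hcon
        push_neg at hcon
        have hs : Real.sign (x - k/N) = -1 := Real.sign_of_neg (by linarith)
        have hz : Hb k = 0 := by
          simp only [hHb]; rw [if_neg (by omega), if_neg (by omega), hs]; ring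
        linarith
    have h2 : x ≤ (↑(k+1):ℝ)/N := by
      rcases le_or_gt N (k+1) with hNk | hNk
      · have hNk' : (N:ℝ) ≤ (↑(k+1):ℕ) := by exact_mod_cast hNk
        have : (1:ℝ) ≤ (↑(k+1):ℕ)/N := by
          rw [le_div_iff₀ hN0]; linarith
        push_cast at this ⊢
        linarith
      · have hlt1 : Hb (k+1) < 1 := lt_of_lt_of_le hlt (hHb_le_one k)
        by_contra hcon
        push_neg at hcon
        push_cast at hcon
        have hs : Real.sign (x - ((k:ℝ)+1)/N) = 1 := Real.sign_of_pos (by linarith)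
        have hz : Hb (k+1) = 1 := by
          simp only [hHb]
          rw [if_neg (by omega), if_neg (by omega)]
          push_cast
          rw [hs]; ring
        linarith
    have he1 : ((k:ℝ)+1)/N = (2*(k:ℝ)+1)/(2*N) + 1/(2*N) := by field_simp; ring
    have he2 : (k:ℝ)/N = (2*(k:ℝ)+1)/(2*N) - 1/(2*N) := by field_simp; ring
    push_cast at h2
    rw [abs_le]
    constructor <;> [linarith; linarith]
  -- algebraic identity
  have halg : (∑ k ∈ Finset.range N, a k * Real.sign (x - k/N)) +
      (q 0 + ∑ k ∈ Finset.range N, a k)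
      = ∑ k ∈ Finset.range N, q k * (Hb k - Hb (k+1)) := by
    have h1 : ∀ k ∈ Finset.range N, q k * (Hb k - Hb (k+1))
        = (q k * Hb k - q (k+1) * Hb (k+1)) + (q (k+1) - q k) * Hb (k+1) := by
      intro k _; ring
    rw [Finset.sum_congr rfl h1, Finset.sum_add_distrib,
      Finset.sum_range_sub' (fun k => q k * Hb k) N, hHb0, hHbN]
    have h2 : ∀ k ∈ Finset.range N, (q (k+1) - q k) * Hb (k+1) = 2 * a (k+1) * Hb (k+1) := by
      intro k _
      have : a (k+1) = (q (k+1) - q k)/2 := by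
        simp only [ha]; rw [if_neg (by omega)]; simp
      rw [this]; ring
    rw [Finset.sum_congr rfl h2]
    have h3 : (∑ k ∈ Finset.range N, 2 * a (k+1) * Hb (k+1))
        = ∑ k ∈ Finset.range N, 2 * a k * Hb k := by
      have hs := Finset.sum_range_succ' (fun k => 2 * a k * Hb k) N
      rw [Finset.sum_range_succ (fun k => 2 * a k * Hb k) N] at hs
      have hF0 : 2 * a 0 * Hb 0 = 0 := by simp [ha]
      have hFN : 2 * a N * Hb N = 0 := by rw [hHbN]; ring
      rw [hF0, hFN] at hs
      linarith
    rw [h3]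
    have h4 : ∀ k ∈ Finset.range N, 2 * a k * Hb k = a k * Real.sign (x - k/N) + a k := by
      intro k hk
      simp only [Finset.mem_range] at hk
      rcases Nat.eq_zero_or_pos k with rfl | hkpos
      · simp [ha]
      · simp only [hHb]; rw [if_neg (by omega), if_neg (by omega)]; ring
    rw [Finset.sum_congr rfl h4, Finset.sum_add_distrib]
    ring
  rw [halg]
  -- final estimate
  have hsum1 : (∑ k ∈ Finset.range N, (Hb k - Hb (k+1))) = 1 := by
    rw [Finset.sum_range_sub' Hb N, hHb0, hHbN]; ring
  have hdecomp : (∑ k ∈ Finset.range N, q k * (Hb k - Hb (k+1))) - fh x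
      = ∑ k ∈ Finset.range N, (q k - fh x) * (Hb k - Hb (k+1)) := by
    have : ∀ k ∈ Finset.range N, (q k - fh x) * (Hb k - Hb (k+1))
        = q k * (Hb k - Hb (k+1)) - fh x * (Hb k - Hb (k+1)) := by intro k _; ring
    rw [Finset.sum_congr rfl this, Finset.sum_sub_distrib, ← Finset.mul_sum, hsum1, mul_one]
  rw [hdecomp]
  have hbound : ∀ k ∈ Finset.range N, |(q k - fh x) * (Hb k - Hb (k+1))|
      ≤ (L/(2*N)) * (Hb k - Hb (k+1)) := by
    intro k hk
    simp only [Finset.mem_range] at hk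
    have hχ : 0 ≤ Hb k - Hb (k+1) := sub_nonneg.mpr (hHb_mono k)
    rcases eq_or_lt_of_le hχ with hz | hpos
    · rw [← hz]; simp
    · have hlt : Hb (k+1) < Hb k := by linarith
      have hnr := hnear k hk hlt
      have hq : |q k - fh x| ≤ L/(2*N) := by
        have := hlip ((2*(k:ℝ)+1)/(2*N)) (hmem k hk) x ⟨hx0, hx1⟩
        have h2 : L * |(2*(k:ℝ)+1)/(2*N) - x| ≤ L * (1/(2*N)) :=
          mul_le_mul_of_nonneg_left hnr (le_of_lt hL)
        simp only [hq]
        push_cast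
        calc |fh ((2*(k:ℝ)+1)/(2*N)) - fh x| ≤ L * |(2*(k:ℝ)+1)/(2*N) - x| := this
          _ ≤ L * (1/(2*N)) := h2
          _ = L/(2*N) := by ring
      rw [abs_mul, abs_of_nonneg hχ]
      exact mul_le_mul_of_nonneg_right hq hχ
  calc |∑ k ∈ Finset.range N, (q k - fh x) * (Hb k - Hb (k+1))|
      ≤ ∑ k ∈ Finset.range N, |(q k - fh x) * (Hb k - Hb (k+1))| :=
        Finset.abs_sum_le_sum_abs _ _
    _ ≤ ∑ k ∈ Finset.range N, (L/(2*N)) * (Hb k - Hb (k+1)) :=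
        Finset.sum_le_sum hbound
    _ = L/(2*N) := by rw [← Finset.mul_sum, hsum1, mul_one]
    _ < ε := hhalf
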